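/- Let p ≥ 3 and s ≥ p be integers, and write s − p + 1 = a(p−2) + b with 0 ≤ b ≤ p−3. Let n be large enough. Then the graph G_1 = K_1 ∨ (K_{p−2} ∨ I_{n−p+1−a(2p−3)} ∪ a·K_{2p−3}) on n vertices contains no cycle of length at least 2p−1 and no matching of size s+1. -/

import Mathlib

open SimpleGraph

/-- The join of two graphs: all edges between the two sides are added. -/
def graphJoin {α β : Type*} (G : SimpleGraph α) (H : SimpleGraph β) : SimpleGraph (α ⊕ β) where
  Adj x y := match x, y with
    | Sum.inl a, Sum.inl b => G.Adj a b
    | Sum.inr a, Sum.inr b => H.Adj a b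
    | _, _ => True
  symm := ⟨by rintro (a | a) (b | b) h <;> first | exact h.symm | exact G.adj_symm h | exact H.adj_symm h | trivial⟩
  loopless := ⟨by rintro (a | a) h <;> exact (SimpleGraph.irrefl _) h⟩

/-- The disjoint union of `a` copies of the complete graph `K_m`. -/
def multiK (a m : ℕ) : SimpleGraph (Fin a × Fin m) where
  Adj x y := x.1 = y.1 ∧ x.2 ≠ y.2
  symm := ⟨by rintro x y ⟨h1, h2⟩; exact ⟨h1.symm, h2.symm⟩⟩
  loopless := ⟨by rintro x ⟨h1, h2⟩; exact h2 rfl⟩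

/-- `G` has no cycle of length at least `k`. -/
def NoLongCycle {α : Type*} (G : SimpleGraph α) (k : ℕ) : Prop :=
  ¬ ∃ (a : α) (c : G.Walk a a), c.IsCycle ∧ k ≤ c.length

/-- `G` has no matching consisting of `m` pairwise disjoint edges. -/
def NoMatchingOfSize {α : Type*} (G : SimpleGraph α) (m : ℕ) : Prop :=
  ∀ M : G.Subgraph, M.IsMatching → M.verts.ncard < 2 * m

/-- The extremal graph `G₁ = K₁ ∨ (K_{p-2} ∨ I_{n-p+1-a(2p-3)} ∪ a K_{2p-3})`. -/
def G1 (p a n : ℕ) :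
    SimpleGraph (Fin 1 ⊕ ((Fin (p - 2) ⊕ Fin (n - p + 1 - a * (2 * p - 3))) ⊕
      (Fin a × Fin (2 * p - 3)))) :=
  graphJoin (⊤ : SimpleGraph (Fin 1))
    ((graphJoin (⊤ : SimpleGraph (Fin (p - 2)))
        (⊥ : SimpleGraph (Fin (n - p + 1 - a * (2 * p - 3))))) ⊕g (multiK a (2 * p - 3)))

section walkfacts
variable {V : Type*} {G : SimpleGraph V}

lemma walk_support_getElem :
    ∀ {u v : V} (p : G.Walk u v) (i : ℕ) (h : i < p.support.length),
      p.support[i] = p.getVert i := by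
  intro u v p
  induction p with
  | nil => intro i h; simp at h; simp [h]
  | cons hadj q ih =>
    intro i h
    cases i with
    | zero => simp
    | succ n =>
      simp only [Walk.support_cons, Walk.getVert_cons_succ]
      rw [List.getElem_cons_succ]
      exact ih n (by simpa [Walk.length_support] using h)

lemma cycle_getVert_inj {w : V} {c : G.Walk w w}
    (hc : c.IsCycle) {i j : ℕ} (hi : i < c.length) (hj : j < c.length)
    (hij : c.getVert i = c.getVert j) : i = j := by
  have hL : 3 ≤ c.length := hc.three_le_length
  have hlen : c.support.length = c.length + 1 := c.length_support
  have htlen : c.support.tail.length = c.length := by simp [hlen]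
  have hnd : c.support.tail.Nodup := hc.support_nodup
  have hsup : ∀ k (hk : k < c.support.length), c.support[k] = c.getVert k :=
    fun k hk => walk_support_getElem c k hk
  have htail : ∀ k (hk : k < c.length), c.support.tail[k]'(by omega) = c.getVert (k+1) := by
    intro k hk
    rw [List.getElem_tail]
    exact hsup (k+1) (by omega)
  have hlast : c.getVert c.length = c.getVert 0 := by
    rw [Walk.getVert_length, Walk.getVert_zero]
  have key : ∀ k l, k < c.length → l < c.length → c.getVert (k+1) = c.getVert (l+1) → k = l := by
    intro k l hk hl he
    have e1 : c.support.tail[k]'(by omega) = c.support.tail[l]'(by omega) := by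
      rw [htail k hk, htail l hl]; exact he
    exact hnd.getElem_inj_iff.mp e1
  rcases Nat.eq_zero_or_pos i with hi0 | hi0
  · rcases Nat.eq_zero_or_pos j with hj0 | hj0
    · omega
    · subst hi0
      have : (c.length - 1) = j - 1 := by
        apply key _ _ (by omega) (by omega)
        have h1 : c.length - 1 + 1 = c.length := by omega
        have h2 : j - 1 + 1 = j := by omega
        rw [h1, h2, hlast]; exact hij
      omega
  · rcases Nat.eq_zero_or_pos j with hj0 | hj0
    · subst hj0
      have : (i - 1) = c.length - 1 := by
        apply key _ _ (by omega) (by omega)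
        have h1 : c.length - 1 + 1 = c.length := by omega
        have h2 : i - 1 + 1 = i := by omega
        rw [h2, h1, hlast]; exact hij
      omega
    · have : (i-1) = (j-1) := by
        apply key _ _ (by omega) (by omega)
        have h1 : i - 1 + 1 = i := by omega
        have h2 : j - 1 + 1 = j := by omega
        rw [h1, h2]; exact hij
      omega

/-- wrap-around adjacency along a cycle -/
lemma cycle_adj_mod {w : V} (c : G.Walk w w) (hc : c.IsCycle) {i : ℕ} (hi : i < c.length) :
    G.Adj (c.getVert i) (c.getVert ((i+1) % c.length)) := by
  have hL : 3 ≤ c.length := hc.three_le_length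
  rcases Nat.lt_or_ge (i+1) c.length with h | h
  · rw [Nat.mod_eq_of_lt h]; exact c.adj_getVert_succ hi
  · have h2 : i + 1 = c.length := by omega
    rw [h2, Nat.mod_self]
    have ha := c.adj_getVert_succ hi
    rw [h2, Walk.getVert_length] at ha
    rwa [Walk.getVert_zero]

end walkfacts

section helpers
variable {p a n : ℕ}

abbrev Vt (p a n : ℕ) := Fin 1 ⊕ ((Fin (p - 2) ⊕ Fin (n - p + 1 - a * (2 * p - 3))) ⊕
      (Fin a × Fin (2 * p - 3)))

def phi : (Fin (p - 2) ⊕ Fin (n - p + 1 - a * (2 * p - 3))) ⊕ (Fin a × Fin (2 * p - 3)) →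
    Option (Fin a)
  | Sum.inl _ => none
  | Sum.inr z => some z.1

lemma vt_inl_eq (z : Fin 1) : (Sum.inl z : Vt p a n) = Sum.inl 0 := by
  congr 1; exact Subsingleton.elim _ _

lemma adj_phi {x y} (h : (G1 p a n).Adj (Sum.inr x) (Sum.inr y)) : phi x = phi y := by
  have h' : ((graphJoin (⊤ : SimpleGraph (Fin (p - 2)))
      (⊥ : SimpleGraph (Fin (n - p + 1 - a * (2 * p - 3))))) ⊕g
      (multiK a (2 * p - 3))).Adj x y := h
  rcases x with x | x <;> rcases y with y | y
  · rfl
  · simp [SimpleGraph.sum] at h'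
  · simp [SimpleGraph.sum] at h'
  · have : x.1 = y.1 := (h' : (multiK a (2*p-3)).Adj x y).1
    simp [phi, this]

lemma adj_I {u y} (h : (G1 p a n).Adj (Sum.inr (Sum.inl (Sum.inr u))) y) :
    y = Sum.inl 0 ∨ ∃ k, y = Sum.inr (Sum.inl (Sum.inl k)) := by
  rcases y with z | (y | y)
  · exact Or.inl (vt_inl_eq z)
  · rcases y with k | u'
    · exact Or.inr ⟨k, rfl⟩
    · exact ((h : (graphJoin (⊤ : SimpleGraph (Fin (p-2))) ⊥).Adj (Sum.inr u) (Sum.inr u')) :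
        (⊥ : SimpleGraph _).Adj u u').elim
  · have h' : ((graphJoin (⊤ : SimpleGraph (Fin (p - 2)))
      (⊥ : SimpleGraph (Fin (n - p + 1 - a * (2 * p - 3))))) ⊕g
      (multiK a (2 * p - 3))).Adj (Sum.inl (Sum.inr u)) (Sum.inr y) := h
    simp [SimpleGraph.sum] at h'

lemma adj_copy {j u y} (h : (G1 p a n).Adj (Sum.inr (Sum.inr (j, u))) y) :
    y = Sum.inl 0 ∨ ∃ u', u' ≠ u ∧ y = Sum.inr (Sum.inr (j, u')) := by
  rcases y with z | (y | y)
  · exact Or.inl (vt_inl_eq z)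
  · have h' : ((graphJoin (⊤ : SimpleGraph (Fin (p - 2)))
      (⊥ : SimpleGraph (Fin (n - p + 1 - a * (2 * p - 3))))) ⊕g
      (multiK a (2 * p - 3))).Adj (Sum.inr (j, u)) (Sum.inl y) := h
    simp [SimpleGraph.sum] at h'
  · obtain ⟨h1, h2⟩ := (h : (multiK a (2*p-3)).Adj (j, u) y)
    refine Or.inr ⟨y.2, fun e => h2 (by simpa using e.symm), ?_⟩
    have : j = y.1 := h1
    simp [this]

end helpers

section cyclepart
variable {p a n : ℕ}

/-- classify including the K1 vertex -/
def phi' : Vt p a n → Option (Option (Fin a))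
  | Sum.inl _ => none
  | Sum.inr x => some (phi x)

def isIb : Vt p a n → Bool
  | Sum.inr (Sum.inl (Sum.inr _)) => true
  | _ => false

lemma cycle_contra (hp : 3 ≤ p) {w : Vt p a n} (c : (G1 p a n).Walk w w) (hc : c.IsCycle)
    (hlen : 2 * p - 1 ≤ c.length)
    (hstar : ∀ i, 1 ≤ i → i < c.length → c.getVert i ≠ Sum.inl 0) : False := by
  classical
  set L := c.length with hLdef
  have hL5 : 5 ≤ L := by omega
  have hinj : ∀ {i j : ℕ}, i < L → j < L → c.getVert i = c.getVert j → i = j :=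
    fun hi hj he => cycle_getVert_inj hc hi hj he
  have hne_inl : ∀ i, 1 ≤ i → i < L → ∃ x, c.getVert i = Sum.inr x := by
    intro i h1 h2
    rcases hx : c.getVert i with z | x
    · exact absurd ((vt_inl_eq z) ▸ hx) (hstar i h1 h2)
    · exact ⟨x, rfl⟩
  have hclass : ∀ i, 1 ≤ i → i < L → phi' (c.getVert i) = phi' (c.getVert 1) := by
    intro i h1
    induction i with
    | zero => omega
    | succ k ih =>
      intro hk
      rcases Nat.eq_zero_or_pos k with rfl | hkpos
      · rfl
      · have hadj := c.adj_getVert_succ (show k < L by omega)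
        obtain ⟨x, hx⟩ := hne_inl k (by omega) (by omega)
        obtain ⟨y, hy⟩ := hne_inl (k+1) (by omega) hk
        rw [hx, hy] at hadj
        have hph := adj_phi hadj
        rw [hy, ← ih (by omega) (by omega), hx]
        simp [phi', hph]
  obtain ⟨x1, hx1⟩ := hne_inl 1 le_rfl (by omega)
  rcases x1 with x1 | ⟨j, u1⟩
  · -- class A : K_{p-2} ⊕ I
    have hA : ∀ i, 1 ≤ i → i < L → (∃ k, c.getVert i = Sum.inr (Sum.inl (Sum.inl k))) ∨
        (∃ u, c.getVert i = Sum.inr (Sum.inl (Sum.inr u))) := by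
      intro i h1 h2
      obtain ⟨x, hx⟩ := hne_inl i h1 h2
      have := hclass i h1 h2
      rw [hx, hx1] at this
      rcases x with x | x
      · rcases x with k | u
        · exact Or.inl ⟨k, hx⟩
        · exact Or.inr ⟨u, hx⟩
      · simp [phi', phi] at this
    set Bad : Finset ℕ := (Finset.range L).filter (fun i => isIb (c.getVert i) = true) with hBdef
    set Good : Finset ℕ := (Finset.range L).filter (fun i => isIb (c.getVert i) = false)
      with hGdef
    have hsplit : Bad.card + Good.card = L := by
      have := Finset.card_filter_add_card_filter_not
        (s := Finset.range L) (p := fun i => isIb (c.getVert i) = true)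
      simpa using this
    have hGoodcard : Good.card ≤ p - 1 := by
      have hle : Good.card ≤ (({Sum.inl 0} : Finset (Vt p a n)) ∪
          Finset.univ.image (fun k : Fin (p-2) => Sum.inr (Sum.inl (Sum.inl k)))).card := by
        apply Finset.card_le_card_of_injOn (fun i => c.getVert i)
        · intro i hi
          simp only [Finset.mem_coe]
          have hi' := Finset.mem_coe.mp hi
          rw [hGdef, Finset.mem_filter, Finset.mem_range] at hi'
          obtain ⟨hiL, hnI⟩ := hi'
          rcases Nat.eq_zero_or_pos i with rfl | hipos
          · rcases hx : c.getVert 0 with z | x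
            · rw [vt_inl_eq z]; simp
            · have hadj := c.adj_getVert_succ (show 0 < L by omega)
              rw [hx, hx1] at hadj
              have hph := adj_phi hadj
              rcases x with x | x
              · rcases x with k | u
                · simp
                · exfalso; rw [hx] at hnI; simp [isIb] at hnI
              · simp [phi, phi'] at hph
          · rcases hA i hipos hiL with ⟨k, hk⟩ | ⟨u, hu⟩
            · rw [hk]; simp
            · exfalso; rw [hu] at hnI; simp [isIb] at hnI
        · intro i hi j hj he
          have hi' := Finset.mem_coe.mp hi
          have hj' := Finset.mem_coe.mp hj
          rw [hGdef, Finset.mem_filter, Finset.mem_range] at hi' hj'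
          exact hinj hi'.1 hj'.1 he
      calc Good.card ≤ _ := hle
        _ ≤ ({Sum.inl 0} : Finset (Vt p a n)).card +
            (Finset.univ.image (fun k : Fin (p-2) => Sum.inr (Sum.inl (Sum.inl k)))).card :=
          Finset.card_union_le _ _
        _ ≤ 1 + (p - 2) := by
          gcongr
          · simp
          · exact (Finset.card_image_le).trans (by simp)
        _ ≤ p - 1 := by omega
    have hBadGood : Bad.card ≤ Good.card := by
      apply Finset.card_le_card_of_injOn (fun i => (i+1) % L)
      · intro i hi
        have hi' := Finset.mem_coe.mp hi
        rw [hBdef, Finset.mem_filter, Finset.mem_range] at hi'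
        obtain ⟨hiL, hI⟩ := hi'
        simp only [Finset.mem_coe]
        rw [hGdef, Finset.mem_filter, Finset.mem_range]
        refine ⟨Nat.mod_lt _ (by omega), ?_⟩
        have hadj := cycle_adj_mod c hc hiL
        rcases hu : c.getVert i with z | x
        · rw [hu] at hI; simp [isIb] at hI
        rcases x with x | x
        · rcases x with k | u
          · rw [hu] at hI; simp [isIb] at hI
          · rw [hu] at hadj
            rcases adj_I hadj with h0 | ⟨k, hk⟩
            · rw [h0]; simp [isIb]
            · rw [hk]; simp [isIb]
        · rw [hu] at hI; simp [isIb] at hI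
      · intro i hi j hj he
        have hi' := Finset.mem_coe.mp hi
        have hj' := Finset.mem_coe.mp hj
        rw [hBdef, Finset.mem_filter, Finset.mem_range] at hi' hj'
        obtain ⟨hiL, -⟩ := hi'
        obtain ⟨hjL, -⟩ := hj'
        simp only at he
        rcases Nat.lt_or_ge (i+1) L with h1 | h1 <;> rcases Nat.lt_or_ge (j+1) L with h2 | h2
        · rw [Nat.mod_eq_of_lt h1, Nat.mod_eq_of_lt h2] at he; omega
        · have hj1 : j + 1 = L := by omega
          rw [Nat.mod_eq_of_lt h1, hj1, Nat.mod_self] at he; omega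
        · have hi1 : i + 1 = L := by omega
          rw [Nat.mod_eq_of_lt h2, hi1, Nat.mod_self] at he; omega
        · omega
    omega
  · -- class: copy j
    have hcopy : ∀ i, 1 ≤ i → i < L → ∃ u, c.getVert i = Sum.inr (Sum.inr (j, u)) := by
      intro i h1 h2
      obtain ⟨x, hx⟩ := hne_inl i h1 h2
      have := hclass i h1 h2
      rw [hx, hx1] at this
      rcases x with x | ⟨j', u⟩
      · simp [phi', phi] at this
      · simp only [phi', phi, Option.some_inj] at this
        exact ⟨u, by rw [hx, this]⟩
    have hIco : (Finset.Ico 1 L).card ≤ (Finset.univ.image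
        (fun u : Fin (2*p-3) => (Sum.inr (Sum.inr (j, u)) : Vt p a n))).card := by
      apply Finset.card_le_card_of_injOn (fun i => c.getVert i)
      · intro i hi
        have hi' := Finset.mem_coe.mp hi
        rw [Finset.mem_Ico] at hi'
        obtain ⟨u, hu⟩ := hcopy i hi'.1 hi'.2
        show c.getVert i ∈ _
        rw [hu]
        exact Finset.mem_coe.mpr (Finset.mem_image_of_mem _ (Finset.mem_univ u))
      · intro i hi k hk he
        have hi' := Finset.mem_coe.mp hi
        have hk' := Finset.mem_coe.mp hk
        rw [Finset.mem_Ico] at hi' hk'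
        exact hinj hi'.2 hk'.2 he
    have h2 : (Finset.univ.image
        (fun u : Fin (2*p-3) => (Sum.inr (Sum.inr (j, u)) : Vt p a n))).card ≤ 2*p-3 :=
      (Finset.card_image_le).trans (by simp)
    rw [Nat.card_Ico] at hIco
    omega

lemma noLongCycleG1 (hp : 3 ≤ p) : NoLongCycle (G1 p a n) (2 * p - 1) := by
  classical
  rintro ⟨w, c, hc, hlen⟩
  rcases Classical.em ((Sum.inl 0 : Vt p a n) ∈ c.support) with hmem | hmem
  · set c' := c.rotate _ hmem with hc'def
    have hc'cyc : c'.IsCycle := hc.rotate hmem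
    have hc'len : c'.length = c.length := by
      have := (c.rotate_darts _ hmem).perm.length_eq
      rw [← Walk.length_darts, ← Walk.length_darts]; exact this
    refine cycle_contra hp c' hc'cyc (by omega) ?_
    intro i h1 h2 he
    have h0 : c'.getVert 0 = Sum.inl 0 := c'.getVert_zero
    have := cycle_getVert_inj hc'cyc h2 (by omega : 0 < c'.length) (he.trans h0.symm)
    omega
  · refine cycle_contra hp c hc hlen ?_
    intro i h1 h2 he
    apply hmem
    rw [Walk.mem_support_iff_exists_getVert]
    exact ⟨i, he, by omega⟩

end cyclepart

section matching
variable {p a n : ℕ}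

def isCb : Vt p a n → Bool
  | Sum.inr (Sum.inr _) => true
  | _ => false

def cIdx : Vt p a n → ℕ
  | Sum.inr (Sum.inr z) => z.1.val
  | _ => 0

lemma noMatchingG1 (hp : 3 ≤ p) {s : ℕ} (hcnt : p - 1 + a * (p - 2) ≤ s) :
    NoMatchingOfSize (G1 p a n) (s + 1) := by
  classical
  intro M hM
  have hfin : M.verts.Finite := Set.toFinite _
  set A : Finset (Vt p a n) := hfin.toFinset with hAdef
  have hmemA : ∀ {v}, v ∈ A ↔ v ∈ M.verts := fun {v} => hfin.mem_toFinset
  -- partner function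
  set f : Vt p a n → Vt p a n := fun v => if h : v ∈ M.verts then (hM h).choose else v with hfdef
  have hfadj : ∀ {v}, v ∈ M.verts → M.Adj v (f v) := by
    intro v hv
    rw [hfdef]; simp only [hv, dif_pos]
    exact (hM hv).choose_spec.1
  have huniq : ∀ {v y}, v ∈ M.verts → M.Adj v y → y = f v := by
    intro v y hv hy
    rw [hfdef]; simp only [hv, dif_pos]
    exact (hM hv).choose_spec.2 y hy
  have hfmem : ∀ {v}, v ∈ M.verts → f v ∈ M.verts := fun {v} hv => (hfadj hv).snd_mem
  have hff : ∀ {v}, v ∈ M.verts → f (f v) = v :=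
    fun {v} hv => (huniq (hfmem hv) (hfadj hv).symm).symm
  have hfne : ∀ {v}, v ∈ M.verts → f v ≠ v := fun {v} hv => (hfadj hv).ne.symm
  have hGadj : ∀ {u v}, M.Adj u v → (G1 p a n).Adj u v := fun {u v} h => M.adj_sub h
  have hfinj : ∀ {u v}, u ∈ M.verts → v ∈ M.verts → f u = f v → u = v := by
    intro u v hu hv he
    have h1 := hff hu
    rw [he, hff hv] at h1
    exact h1.symm
  -- the canonical-endpoint selector
  set e := Fintype.equivFin (Vt p a n) with hedef
  set r : Vt p a n → Vt p a n := fun v => if e (f v) < e v then f v else v with hrdef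
  have hr_mem_pair : ∀ v, r v = v ∨ r v = f v := by
    intro v; rw [hrdef]; dsimp only; split
    · exact Or.inr rfl
    · exact Or.inl rfl
  have hrf : ∀ {v}, v ∈ M.verts → r (f v) = r v := by
    intro v hv
    have hne : e (f v) ≠ e v := fun h => hfne hv (e.injective h)
    rw [hrdef]; dsimp only
    rw [hff hv]
    rcases lt_or_gt_of_ne hne with h | h
    · rw [if_neg (asymm h), if_pos h]
    · rw [if_pos h, if_neg (asymm h)]
  -- the cover set
  set KD : Finset (Vt p a n) := {Sum.inl 0} ∪
    Finset.univ.image (fun k : Fin (p-2) => Sum.inr (Sum.inl (Sum.inl k))) with hKDdef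
  set F : Finset (Vt p a n) := A.filter (fun v => isCb v = true ∧ f v ≠ Sum.inl 0) with hFdef
  set Im : Finset (Vt p a n) := F.image r with hImdef
  set D : Finset (Vt p a n) := KD ∪ Im with hDdef
  have hKD_sub : KD ⊆ D := Finset.subset_union_left
  -- basic facts about Im members
  have hIm : ∀ u ∈ Im, u ∈ M.verts ∧ (∃ j w, u = Sum.inr (Sum.inr (j, w))) ∧
      f u ≠ Sum.inl 0 ∧ r u = u := by
    intro u hu
    obtain ⟨v, hvF, hrv⟩ := Finset.mem_image.mp hu
    rw [hFdef, Finset.mem_filter] at hvF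
    obtain ⟨hvA, hvC, hvf0⟩ := hvF
    have hvM : v ∈ M.verts := hmemA.mp hvA
    obtain ⟨j, w, hvform⟩ : ∃ j w, v = Sum.inr (Sum.inr (j, w)) := by
      rcases v with z | (x | z)
      · simp [isCb] at hvC
      · simp [isCb] at hvC
      · exact ⟨z.1, z.2, rfl⟩
    have hadj0 : (G1 p a n).Adj (Sum.inr (Sum.inr (j, w))) (f v) := by
      rw [← hvform]; exact hGadj (hfadj hvM)
    rcases hr_mem_pair v with h | h
    · have huv : u = v := by rw [← hrv, h]
      refine ⟨huv ▸ hvM, ⟨j, w, huv ▸ hvform⟩, by rw [huv]; exact hvf0, ?_⟩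
      rw [huv]; exact h
    · have huv : u = f v := by rw [← hrv, h]
      refine ⟨by rw [huv]; exact hfmem hvM, ?_, ?_, ?_⟩
      · rcases adj_copy hadj0 with h0 | ⟨w', hw', hform⟩
        · exact absurd (hvform ▸ h0) (hvform ▸ hvf0)
        · exact ⟨j, w', by rw [huv]; exact hvform ▸ hform⟩
      · rw [huv, hff hvM, hvform]; simp
      · rw [huv, hrf hvM]; exact h
  have hfu_copy : ∀ u ∈ Im, ∃ j w w', w' ≠ w ∧ u = Sum.inr (Sum.inr (j, w)) ∧
      f u = Sum.inr (Sum.inr (j, w')) := by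
    intro u hu
    obtain ⟨huM, ⟨j, w, hform⟩, hf0, -⟩ := hIm u hu
    have hadj0 : (G1 p a n).Adj (Sum.inr (Sum.inr (j, w))) (f u) := by
      rw [← hform]; exact hGadj (hfadj huM)
    rcases adj_copy hadj0 with h0 | ⟨w', hw', hform'⟩
    · exact absurd h0 hf0
    · exact ⟨j, w, w', hw', hform, hform'⟩
  have hfu_notIm : ∀ u ∈ Im, f u ∉ Im := by
    intro u hu hfu
    have h1 := (hIm u hu).2.2.2
    have h2 := (hIm (f u) hfu).2.2.2
    have h3 : r (f u) = r u := hrf (hIm u hu).1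
    have : f u = u := by rw [← h2, h3, h1]
    exact hfne (hIm u hu).1 this
  -- covering property
  have hcov : ∀ v ∈ M.verts, v ∉ D → f v ∈ D := by
    intro v hv hvD
    rcases v with z | (x | z)
    · exact absurd (hKD_sub (by rw [vt_inl_eq z, hKDdef]; simp)) hvD
    · rcases x with k | u
      · exact absurd (hKD_sub (by rw [hKDdef]; simp)) hvD
      · have hadj := hGadj (hfadj hv)
        rcases adj_I hadj with h0 | ⟨k, hk⟩
        · exact hKD_sub (by rw [h0, hKDdef]; simp)
        · exact hKD_sub (by rw [hk, hKDdef]; simp)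
    · by_cases h0 : f (Sum.inr (Sum.inr z)) = Sum.inl 0
      · exact hKD_sub (by rw [h0, hKDdef]; simp)
      · have hvF : (Sum.inr (Sum.inr z) : Vt p a n) ∈ F := by
          rw [hFdef, Finset.mem_filter]
          exact ⟨hmemA.mpr hv, by simp [isCb], h0⟩
        have hrD : r (Sum.inr (Sum.inr z)) ∈ D :=
          Finset.mem_union_right _ (Finset.mem_image_of_mem r hvF)
        rcases hr_mem_pair (Sum.inr (Sum.inr z) : Vt p a n) with h | h
        · exact absurd (h ▸ hrD) hvD
        · exact h ▸ hrD
  -- main injection : |A| ≤ 2 |D|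
  have hcard1 : A.card ≤ 2 * D.card := by
    have hle : A.card ≤ ((Finset.univ : Finset Bool) ×ˢ D).card := by
      apply Finset.card_le_card_of_injOn
        (fun v => if v ∈ D then ((false, v) : Bool × Vt p a n) else (true, f v))
      · intro v hv
        beta_reduce
        have hvM : v ∈ M.verts := hmemA.mp (Finset.mem_coe.mp hv)
        by_cases hD : v ∈ D
        · rw [if_pos hD]
          exact Finset.mem_coe.mpr (Finset.mem_product.mpr ⟨Finset.mem_univ _, hD⟩)
        · rw [if_neg hD]
          exact Finset.mem_coe.mpr (Finset.mem_product.mpr ⟨Finset.mem_univ _, hcov v hvM hD⟩)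
      · intro u hu v hv he
        have huM : u ∈ M.verts := hmemA.mp (Finset.mem_coe.mp hu)
        have hvM : v ∈ M.verts := hmemA.mp (Finset.mem_coe.mp hv)
        simp only at he
        by_cases h1 : u ∈ D <;> by_cases h2 : v ∈ D
        · rw [if_pos h1, if_pos h2] at he; exact (Prod.ext_iff.mp he).2
        · rw [if_pos h1, if_neg h2] at he; exact absurd (Prod.ext_iff.mp he).1 (by simp)
        · rw [if_neg h1, if_pos h2] at he; exact absurd (Prod.ext_iff.mp he).1 (by simp)
        · rw [if_neg h1, if_neg h2] at he
          exact hfinj huM hvM (Prod.ext_iff.mp he).2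
    calc A.card ≤ _ := hle
      _ = 2 * D.card := by rw [Finset.card_product]; simp
  -- |KD| ≤ p - 1
  have hKDcard : KD.card ≤ 1 + (p - 2) := by
    rw [hKDdef]
    calc ({Sum.inl 0} ∪ Finset.univ.image
          (fun k : Fin (p-2) => (Sum.inr (Sum.inl (Sum.inl k)) : Vt p a n))).card
        ≤ _ := Finset.card_union_le _ _
      _ ≤ 1 + (p - 2) := by
          gcongr
          · simp
          · exact (Finset.card_image_le).trans (by simp)
  -- |Im| ≤ a * (p - 2) via fibers
  have hImcard : Im.card ≤ a * (p - 2) := by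
    have hfiber : Im.card = ∑ jv ∈ Finset.range a, (Im.filter (fun u => cIdx u = jv)).card := by
      apply Finset.card_eq_sum_card_fiberwise
      intro x hx
      obtain ⟨-, ⟨j, w, hform⟩, -, -⟩ := hIm x hx
      rw [Finset.mem_coe, hform, Finset.mem_range]
      exact j.isLt
    rw [hfiber]
    have hbound : ∀ jv ∈ Finset.range a, (Im.filter (fun u => cIdx u = jv)).card ≤ p - 2 := by
      intro jv hjv
      have hjva : jv < a := Finset.mem_range.mp hjv
      set Ij : Finset (Vt p a n) := Im.filter (fun u => cIdx u = jv) with hIjdef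
      have h2card : Ij.card * 2 ≤ 2 * p - 3 := by
        have hle : (Ij ×ˢ (Finset.univ : Finset Bool)).card ≤ (Finset.univ.image
            (fun w : Fin (2*p-3) => (Sum.inr (Sum.inr (⟨jv, hjva⟩, w)) : Vt p a n))).card := by
          apply Finset.card_le_card_of_injOn (fun q => if q.2 then f q.1 else q.1)
          · rintro ⟨u, bq⟩ hq
            have hq' := Finset.mem_product.mp (Finset.mem_coe.mp hq)
            have hqIm : u ∈ Im := (Finset.mem_filter.mp hq'.1).1
            have hqj : cIdx u = jv := (Finset.mem_filter.mp hq'.1).2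
            obtain ⟨j, w, w', hww', hform, hform'⟩ := hfu_copy u hqIm
            have hjval : j = (⟨jv, hjva⟩ : Fin a) := by
              rw [hform] at hqj
              exact Fin.ext (by simpa [cIdx] using hqj)
            cases bq
            · show u ∈ _
              rw [hform, hjval]
              exact Finset.mem_coe.mpr (Finset.mem_image_of_mem _ (Finset.mem_univ w))
            · show f u ∈ _
              rw [hform', hjval]
              exact Finset.mem_coe.mpr (Finset.mem_image_of_mem _ (Finset.mem_univ w'))
          · rintro ⟨u, bq⟩ hq ⟨u', bq'⟩ hq' he
            have hqm := Finset.mem_product.mp (Finset.mem_coe.mp hq)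
            have hq'm := Finset.mem_product.mp (Finset.mem_coe.mp hq')
            have hqIm : u ∈ Im := (Finset.mem_filter.mp hqm.1).1
            have hq'Im : u' ∈ Im := (Finset.mem_filter.mp hq'm.1).1
            have hqM : u ∈ M.verts := (hIm _ hqIm).1
            have hq'M : u' ∈ M.verts := (hIm _ hq'Im).1
            cases bq <;> cases bq' <;>
              simp only [Bool.false_eq_true, if_true, if_false, ite_true, ite_false] at he
            · rw [he]
            · exact absurd (by rw [← he]; exact hqIm) (hfu_notIm u' hq'Im)
            · exact absurd (by rw [he]; exact hq'Im) (hfu_notIm u hqIm)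
            · rw [hfinj hqM hq'M he]
        have him : (Finset.univ.image
            (fun w : Fin (2*p-3) => (Sum.inr (Sum.inr (⟨jv, hjva⟩, w)) : Vt p a n))).card
            ≤ 2*p-3 := (Finset.card_image_le).trans (by simp)
        calc Ij.card * 2 = (Ij ×ˢ (Finset.univ : Finset Bool)).card := by
              rw [Finset.card_product]; simp
          _ ≤ _ := hle
          _ ≤ 2*p-3 := him
      omega
    calc ∑ jv ∈ Finset.range a, (Im.filter (fun u => cIdx u = jv)).card
        ≤ ∑ jv ∈ Finset.range a, (p - 2) := Finset.sum_le_sum hbound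
      _ = a * (p - 2) := by simp [Finset.sum_const, mul_comm]
  -- conclude
  have hncard : M.verts.ncard = A.card := Set.ncard_eq_toFinset_card _ hfin
  have hD : D.card ≤ (1 + (p - 2)) + a * (p - 2) :=
    (Finset.card_union_le _ _).trans (by omega)
  rw [hncard]
  have : A.card ≤ 2 * ((1 + (p - 2)) + a * (p - 2)) := hcard1.trans (by omega)
  have harith : (1 + (p - 2)) + a * (p - 2) ≤ s := by omega
  omega

end matching

theorem stmt_8 (p s a b : ℕ) (hp : 3 ≤ p) (hs : p ≤ s)
    (hab : s - p + 1 = a * (p - 2) + b) (hb : b ≤ p - 3) :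
    ∃ N : ℕ, ∀ n : ℕ, N ≤ n →
      NoLongCycle (G1 p a n) (2 * p - 1) ∧ NoMatchingOfSize (G1 p a n) (s + 1) := by
  refine ⟨0, fun n _ => ⟨noLongCycleG1 hp, noMatchingG1 hp ?_⟩⟩
  have h := hab
  generalize a * (p - 2) = t at h ⊢
  omega
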